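/- Let M = QΛQᵀ with Q orthogonal and Λ diagonal with entries in [0,1], and let 0 = t₀ < t₁ < ⋯ < t_J. Then the operator T x := (M^(t_J)x, (M^(t₀) − M^(t₁))x, …, (M^(t_{J−1}) − M^(t_J))x) from ℝⁿ to (ℝⁿ)^(J+1) is injective and nonexpansive with respect to the Euclidean norms (where the norm on the codomain is the square root of the sum of squared norms of components). -/
import Mathlib

open Matrix in
private lemma orth_sum_sq {n : ℕ} (Q : Matrix (Fin n) (Fin n) ℝ)
    (h : Qᵀ * Q = 1) (w : Fin n → ℝ) :
    ∑ i, (Q.mulVec w i) ^ 2 = ∑ i, w i ^ 2 := by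
  have h1 : (Q *ᵥ w) ⬝ᵥ (Q *ᵥ w) = w ⬝ᵥ w := by
    rw [Matrix.dotProduct_mulVec, ← Matrix.mulVec_transpose, Matrix.mulVec_mulVec, h,
      Matrix.one_mulVec]
  simpa [dotProduct, sq] using h1

private lemma scalar_bound (J : ℕ) (t : ℕ → ℕ) (ht0 : t 0 = 0)
    (hmono : ∀ j < J, t j < t (j + 1)) (ξ : ℝ) (h0 : 0 ≤ ξ) (h1 : ξ ≤ 1) :
    (ξ ^ t J) ^ 2 + ∑ j ∈ Finset.range J, (ξ ^ t j - ξ ^ t (j + 1)) ^ 2 ≤ 1 := by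
  have hd : ∀ j ∈ Finset.range J, 0 ≤ ξ ^ t j - ξ ^ t (j + 1) := fun j hj =>
    sub_nonneg.mpr (pow_le_pow_of_le_one h0 h1 (hmono j (Finset.mem_range.mp hj)).le)
  have htel : ∑ j ∈ Finset.range J, (ξ ^ t j - ξ ^ t (j + 1)) = 1 - ξ ^ t J := by
    rw [Finset.sum_range_sub' (fun j => ξ ^ t j) J, ht0, pow_zero]
  have hJ0 : 0 ≤ ξ ^ t J := pow_nonneg h0 _
  have hJ1 : ξ ^ t J ≤ 1 := pow_le_one₀ h0 h1
  have hle1 : ∀ j ∈ Finset.range J, ξ ^ t j - ξ ^ t (j + 1) ≤ 1 := by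
    intro j hj
    have := Finset.single_le_sum hd hj
    rw [htel] at this
    linarith
  have h1' : (ξ ^ t J) ^ 2 ≤ ξ ^ t J := by nlinarith
  have h2' : ∑ j ∈ Finset.range J, (ξ ^ t j - ξ ^ t (j + 1)) ^ 2
      ≤ ∑ j ∈ Finset.range J, (ξ ^ t j - ξ ^ t (j + 1)) := by
    apply Finset.sum_le_sum
    intro j hj
    nlinarith [hd j hj, hle1 j hj]
  calc (ξ ^ t J) ^ 2 + ∑ j ∈ Finset.range J, (ξ ^ t j - ξ ^ t (j + 1)) ^ 2
      ≤ ξ ^ t J + ∑ j ∈ Finset.range J, (ξ ^ t j - ξ ^ t (j + 1)) := by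
        exact add_le_add h1' h2'
    _ = 1 := by rw [htel]; ring

open Matrix in
theorem stmt15 (n : ℕ) (Q : Matrix (Fin n) (Fin n) ℝ)
    (hQ : Q ∈ Matrix.orthogonalGroup (Fin n) ℝ)
    (lam : Fin n → ℝ) (hlam : ∀ i, lam i ∈ Set.Icc (0 : ℝ) 1)
    (M : Matrix (Fin n) (Fin n) ℝ) (hM : M = Q * Matrix.diagonal lam * Q.transpose)
    (J : ℕ) (t : ℕ → ℕ) (ht0 : t 0 = 0) (hmono : ∀ j < J, t j < t (j + 1))
    (T : (Fin n → ℝ) → Fin (J + 1) → Fin n → ℝ)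
    (hT : ∀ x, T x = Fin.cons ((M ^ t J).mulVec x)
        (fun j : Fin J => (M ^ t (j : ℕ) - M ^ t ((j : ℕ) + 1)).mulVec x)) :
    Function.Injective T ∧
    ∀ x : Fin n → ℝ, ∑ j, ∑ i, (T x j i) ^ 2 ≤ ∑ i, (x i) ^ 2 := by
  have hQQt : Q * Qᵀ = 1 := by
    have := (Matrix.mem_orthogonalGroup_iff _ _).mp hQ
    simpa [Matrix.star_eq_conjTranspose] using this
  have hQtQ : Qᵀ * Q = 1 := by
    have := (Matrix.mem_orthogonalGroup_iff' _ _).mp hQ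
    simpa [Matrix.star_eq_conjTranspose] using this
  have key : ∀ A B : Matrix (Fin n) (Fin n) ℝ,
      (Q * A * Qᵀ) * (Q * B * Qᵀ) = Q * (A * B) * Qᵀ := by
    intro A B
    simp only [Matrix.mul_assoc]
    rw [← Matrix.mul_assoc Qᵀ Q, hQtQ, Matrix.one_mul]
  have hMk : ∀ k, M ^ k = Q * Matrix.diagonal (fun i => lam i ^ k) * Qᵀ := by
    intro k
    induction k with
    | zero => simp [hQQt]
    | succ k ih =>
      rw [pow_succ, ih, hM, key, Matrix.diagonal_mul_diagonal]
      congr 1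
  have hdiff : ∀ a b : ℕ, M ^ a - M ^ b
      = Q * Matrix.diagonal (fun i => lam i ^ a - lam i ^ b) * Qᵀ := by
    intro a b
    rw [hMk a, hMk b, ← Matrix.sub_mul, ← Matrix.mul_sub]
    have : (fun i => lam i ^ a - lam i ^ b)
        = (fun i => lam i ^ a) - (fun i => lam i ^ b) := rfl
    rw [this, Matrix.diagonal_sub]
    rfl
  -- sum over components of T x equals x
  have hsumT : ∀ x : Fin n → ℝ, ∑ j : Fin (J + 1), T x j = x := by
    intro x
    rw [hT x, Fin.sum_cons]
    have h2 : ∑ j : Fin J, (M ^ t (j : ℕ) - M ^ t ((j : ℕ) + 1)) *ᵥ x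
        = (M ^ t 0) *ᵥ x - (M ^ t J) *ᵥ x := by
      rw [Fin.sum_univ_eq_sum_range (fun j => (M ^ t j - M ^ t (j + 1)) *ᵥ x) J]
      simp only [Matrix.sub_mulVec]
      exact Finset.sum_range_sub' (fun j => (M ^ t j) *ᵥ x) J
    rw [h2, ht0, pow_zero, Matrix.one_mulVec]
    abel
  constructor
  · intro x z h
    calc x = ∑ j : Fin (J + 1), T x j := (hsumT x).symm
      _ = ∑ j : Fin (J + 1), T z j := by rw [h]
      _ = z := hsumT z
  · intro x
    have hy : ∑ i, ((Qᵀ *ᵥ x) i) ^ 2 = ∑ i, x i ^ 2 :=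
      orth_sum_sq Qᵀ (by rw [Matrix.transpose_transpose]; exact hQQt) x
    have hsq : ∀ d : Fin n → ℝ,
        ∑ i, (((Q * Matrix.diagonal d * Qᵀ) *ᵥ x) i) ^ 2
          = ∑ i, (d i) ^ 2 * ((Qᵀ *ᵥ x) i) ^ 2 := by
      intro d
      have hv : (Q * Matrix.diagonal d * Qᵀ) *ᵥ x
          = Q *ᵥ (fun i => d i * (Qᵀ *ᵥ x) i) := by
        have harg : Matrix.diagonal d *ᵥ (Qᵀ *ᵥ x) = fun i => d i * (Qᵀ *ᵥ x) i := by
          funext i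
          rw [Matrix.mulVec_diagonal]
        rw [← Matrix.mulVec_mulVec, ← Matrix.mulVec_mulVec, harg]
      rw [hv, orth_sum_sq Q hQtQ]
      exact Finset.sum_congr rfl fun i _ => by ring
    rw [hT x, Fin.sum_univ_succ]
    simp only [Fin.cons_zero, Fin.cons_succ]
    have hhead : ∑ i, (((M ^ t J) *ᵥ x) i) ^ 2
        = ∑ i, (lam i ^ t J) ^ 2 * ((Qᵀ *ᵥ x) i) ^ 2 := by
      rw [hMk (t J), hsq]
    have htail : ∀ j : Fin J,
        ∑ i, (((M ^ t (j : ℕ) - M ^ t ((j : ℕ) + 1)) *ᵥ x) i) ^ 2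
          = ∑ i, (lam i ^ t (j : ℕ) - lam i ^ t ((j : ℕ) + 1)) ^ 2 * ((Qᵀ *ᵥ x) i) ^ 2 := by
      intro j
      rw [hdiff, hsq]
    rw [hhead, Finset.sum_congr rfl fun j _ => htail j]
    rw [Finset.sum_comm, ← Finset.sum_add_distrib]
    calc ∑ i, ((lam i ^ t J) ^ 2 * ((Qᵀ *ᵥ x) i) ^ 2
          + ∑ j : Fin J, (lam i ^ t (j : ℕ) - lam i ^ t ((j : ℕ) + 1)) ^ 2 * ((Qᵀ *ᵥ x) i) ^ 2)
        ≤ ∑ i, ((Qᵀ *ᵥ x) i) ^ 2 := by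
          apply Finset.sum_le_sum
          intro i _
          have hb := scalar_bound J t ht0 hmono (lam i) (hlam i).1 (hlam i).2
          have hy2 : (0 : ℝ) ≤ ((Qᵀ *ᵥ x) i) ^ 2 := sq_nonneg _
          rw [Fin.sum_univ_eq_sum_range
            (fun j => (lam i ^ t j - lam i ^ t (j + 1)) ^ 2 * ((Qᵀ *ᵥ x) i) ^ 2) J,
            ← Finset.sum_mul, ← add_mul]
          exact mul_le_of_le_one_left hy2 hb
      _ = ∑ i, x i ^ 2 := hy
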